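/- The only quadruple of odd positive integers (x₁, x₂, x₃, x₄) with x₄ ≤ x₃ ≤ x₂ ≤ x₁, x₂ + x₃ + x₄ ≤ x₁, gcd(x₁,x₂,x₃,x₄) = 1, and x₁² = x₂² + x₃² + 7·x₄² is (x₁, x₂, x₃, x₄) = (3, 1, 1, 1). -/
import Mathlib


/-- the only quadruple of odd positive integers with
x₄ ≤ x₃ ≤ x₂ ≤ x₁, x₂ + x₃ + x₄ ≤ x₁, gcd = 1 and x₁² = x₂² + x₃² + 7x₄²
is (3,1,1,1). -/
theorem diophantine_3111
    (x₁ x₂ x₃ x₄ : ℤ)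
    (hp1 : 0 < x₁) (hp2 : 0 < x₂) (hp3 : 0 < x₃) (hp4 : 0 < x₄)
    (ho1 : Odd x₁) (ho2 : Odd x₂) (ho3 : Odd x₃) (ho4 : Odd x₄)
    (h43 : x₄ ≤ x₃) (h32 : x₃ ≤ x₂) (h21 : x₂ ≤ x₁)
    (hsum : x₂ + x₃ + x₄ ≤ x₁)
    (hgcd : ∀ d : ℤ, d ∣ x₁ → d ∣ x₂ → d ∣ x₃ → d ∣ x₄ → IsUnit d)
    (heq : x₁ ^ 2 = x₂ ^ 2 + x₃ ^ 2 + 7 * x₄ ^ 2) :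
    x₁ = 3 ∧ x₂ = 1 ∧ x₃ = 1 ∧ x₄ = 1 := by
  have hsq : (x₂ + x₃ + x₄) ^ 2 ≤ x₁ ^ 2 := by nlinarith
  have h24 : x₂ = x₄ := by nlinarith [mul_le_mul h32 h43 (le_of_lt hp4) (le_of_lt hp2)]
  have h34 : x₃ = x₄ := by nlinarith [mul_le_mul h32 h43 (le_of_lt hp4) (le_of_lt hp2)]
  have h14 : x₁ = 3 * x₄ := by nlinarith
  have hu : IsUnit x₄ := hgcd x₄ ⟨3, by linarith⟩ ⟨1, by linarith⟩ ⟨1, by linarith⟩ dvd_rfl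
  have h41 : x₄ = 1 := by
    rcases Int.isUnit_iff.mp hu with h | h
    · exact h
    · omega
  refine ⟨by omega, by omega, by omega, h41⟩
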